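/- arXiv:1011.3645 — 3 statements merged into one kernel-verified Lean document; each statement's English description precedes it below -/
import Mathlib

section
/- Let H^ε be a self-adjoint operator on a Hilbert space ℋ, P an orthogonal projection, E_max ∈ ℝ, and C, ε₀ > 0 such that ‖[P, H^ε] χ_{(-∞,E_max]}(H^ε)‖ ≤ Cε³ for ε < ε₀. Then for every normalized ψ ∈ Ran(χ_{(-∞,E_max]}(H^ε)) ∩ Ran(P) ∩ D(H^ε) and all t ∈ ℝ, ‖(1-P) e^{-iH^ε t} ψ‖ ≤ Cε³|t|. -/
open ContinuousLinearMap
open scoped InnerProductSpace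

section Aux

variable {ℋ : Type*} [NormedAddCommGroup ℋ] [InnerProductSpace ℂ ℋ] [CompleteSpace ℋ]

/-- derivative of `s ↦ exp ((a s) • A)` as an `ℝ`-linear-map-valued function. -/
lemma aux_expDerivR (A : ℋ →L[ℂ] ℋ) (a : ℂ) (s : ℝ) :
    HasDerivAt (fun u : ℝ => ((NormedSpace.exp ((a * u) • A)).restrictScalars ℝ))
      ((a • (NormedSpace.exp ((a * s) • A) * A)).restrictScalars ℝ) s := by
  have h1 : HasDerivAt (fun z : ℂ => NormedSpace.exp (z • A))
      (NormedSpace.exp ((a * (s : ℂ)) • A) * A) (a * (s : ℂ)) :=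
    hasDerivAt_exp_smul_const A _
  have h2 : HasDerivAt (fun u : ℝ => a * (u : ℂ)) a s := by
    simpa using ((hasDerivAt_id ((s : ℝ) : ℂ)).const_mul a).comp_ofReal
  have h3 : HasDerivAt (fun u : ℝ => NormedSpace.exp ((a * u) • A))
      (a • (NormedSpace.exp ((a * (s : ℂ)) • A) * A)) s := by
    have := h1.scomp s h2; exact this
  exact (ContinuousLinearMap.restrictScalarsL ℂ ℋ ℋ ℝ ℝ).hasFDerivAt.comp_hasDerivAt s h3

/-- `exp (c • A)` is norm-preserving when `A` is self-adjoint and `c` purely imaginary. -/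
lemma aux_exp_norm {A : ℋ →L[ℂ] ℋ} (hA : IsSelfAdjoint A) (c : ℂ) (hc : star c = -c)
    (x : ℋ) : ‖NormedSpace.exp (c • A) x‖ = ‖x‖ := by
  set U := NormedSpace.exp (c • A) with hU
  have hstar : star U * U = 1 := by
    letI : NormedAlgebra ℚ (ℋ →L[ℂ] ℋ) := NormedAlgebra.restrictScalars ℚ ℂ _
    rw [hU, NormedSpace.star_exp, star_smul, hA.star_eq, hc,
      ← NormedSpace.exp_add_of_commute (((Commute.refl A).smul_left (-c)).smul_right c)]
    simp [← add_smul]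
  have hUx : star U (U x) = x := by
    have := congrArg (fun T : ℋ →L[ℂ] ℋ => T x) hstar
    simpa [ContinuousLinearMap.mul_apply] using this
  have h2 : (⟪x, x⟫_ℂ) = ⟪U x, U x⟫_ℂ := by
    have h := ContinuousLinearMap.adjoint_inner_left U x (U x)
    rwa [← ContinuousLinearMap.star_eq_adjoint, hUx] at h
  have h3 : ‖x‖ ^ 2 = ‖U x‖ ^ 2 := by
    rw [← inner_self_eq_norm_sq (𝕜 := ℂ) x, ← inner_self_eq_norm_sq (𝕜 := ℂ) (U x), h2]
  rw [← Real.sqrt_sq (norm_nonneg (U x)), ← Real.sqrt_sq (norm_nonneg x), h3]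

end Aux

/-- if `‖[P,H^ε] χ_{(-∞,E_max]}(H^ε)‖ ≤ Cε³`, then states starting in
`Ran χ_{(-∞,E_max]}(H^ε) ∩ Ran P` stay in `Ran P` up to errors `Cε³|t|` under the
time evolution `e^{-iH^ε t}`. -/
theorem almost_invariant_subspace_dynamics
    {ℋ : Type*} [NormedAddCommGroup ℋ] [InnerProductSpace ℂ ℋ] [CompleteSpace ℋ]
    (Hop P χ : ℋ →L[ℂ] ℋ) (C ε ε₀ Emax : ℝ) (hC : 0 < C) (hε : 0 < ε) (hεε₀ : ε < ε₀)
    (hH : IsSelfAdjoint Hop)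
    (hPsa : IsSelfAdjoint P) (hPproj : P ∘L P = P)
    -- `χ` is the spectral cutoff `χ_{(-∞,E_max]}(H^ε)`: an orthogonal projection
    -- commuting with `H^ε`, on whose range `H^ε` is bounded by `E_max`
    (hχsa : IsSelfAdjoint χ) (hχproj : χ ∘L χ = χ) (hχcomm : Hop ∘L χ = χ ∘L Hop)
    (hχE : ∀ ψ, χ ψ = ψ → (Complex.re ⟪ψ, Hop ψ⟫_ℂ) ≤ Emax * ‖ψ‖ ^ 2)
    -- almost-invariance: `‖[P, H^ε] χ_{(-∞,E_max]}(H^ε)‖ ≤ C ε³`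
    (hinv : ‖(P ∘L Hop - Hop ∘L P) ∘L χ‖ ≤ C * ε ^ 3)
    -- a normalized state in `Ran χ ∩ Ran P`
    (ψ : ℋ) (hψ : ‖ψ‖ = 1) (hψχ : χ ψ = ψ) (hψP : P ψ = ψ) :
    ∀ t : ℝ,
      ‖(NormedSpace.exp ((-(Complex.I * t)) • Hop)) ψ -
        P ((NormedSpace.exp ((-(Complex.I * t)) • Hop)) ψ)‖ ≤ C * ε ^ 3 * |t| := by
  intro t
  set K : ℋ →L[ℂ] ℋ := (P ∘L Hop - Hop ∘L P) ∘L χ with hK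
  set Uop : ℝ → (ℋ →L[ℂ] ℋ) := fun s => NormedSpace.exp (((-Complex.I) * s) • Hop) with hUop
  set Vop : ℝ → (ℋ →L[ℂ] ℋ) := fun s => NormedSpace.exp ((Complex.I * s) • Hop) with hVop
  -- rewrite the goal exponent
  have hexp : ∀ s : ℝ, (-(Complex.I * s)) • Hop = ((-Complex.I) * s) • Hop := by
    intro s; ring_nf
  rw [show ((-(Complex.I * (t : ℂ))) • Hop) = ((-Complex.I) * t) • Hop from hexp t]
  -- basic commutation facts
  have hcommHχ : Commute Hop χ := hχcomm
  have hUcomm : ∀ s : ℝ, ∀ y, Uop s (Hop y) = Hop (Uop s y) := by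
    intro s y
    have h : Commute (Uop s) Hop :=
      (((Commute.refl Hop).smul_left (((-Complex.I) * s : ℂ)))).exp_left
    have := congrArg (fun T : ℋ →L[ℂ] ℋ => T y) h.eq
    simpa [ContinuousLinearMap.mul_apply] using this
  have hUχ : ∀ s : ℝ, χ (Uop s ψ) = Uop s ψ := by
    intro s
    have h : Commute (Uop s) χ :=
      ((hcommHχ.symm.smul_right (((-Complex.I) * s : ℂ)))).symm.exp_left
    have := congrArg (fun T : ℋ →L[ℂ] ℋ => T ψ) h.eq
    simp only [ContinuousLinearMap.mul_apply] at this
    rw [← this, hψχ]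
  -- norm preservation
  have hcU : ∀ s : ℝ, star ((-Complex.I) * (s : ℂ)) = -((-Complex.I) * s) := by
    intro s
    simp [Complex.ext_iff]
  have hcV : ∀ s : ℝ, star (Complex.I * (s : ℂ)) = -(Complex.I * s) := by
    intro s
    simp [Complex.ext_iff]
  have hUnorm : ∀ s : ℝ, ∀ x, ‖Uop s x‖ = ‖x‖ := fun s x => aux_exp_norm hH _ (hcU s) x
  have hVnorm : ∀ s : ℝ, ∀ x, ‖Vop s x‖ = ‖x‖ := fun s x => aux_exp_norm hH _ (hcV s) x
  -- the comparison function
  set g : ℝ → ℋ := fun s => Vop s (Uop s ψ - P (Uop s ψ)) with hg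
  have hg0 : g 0 = 0 := by
    simp [hg, hψP, hUop, hVop]
  -- derivative of g
  have hgderiv : ∀ s : ℝ,
      HasDerivAt g (Complex.I • Vop s (K (Uop s ψ))) s := by
    intro s
    have hU : HasDerivAt (fun u : ℝ => ((Uop u).restrictScalars ℝ))
        ((((-Complex.I)) • (Uop s * Hop)).restrictScalars ℝ) s := aux_expDerivR Hop _ s
    have hV : HasDerivAt (fun u : ℝ => ((Vop u).restrictScalars ℝ))
        ((Complex.I • (Vop s * Hop)).restrictScalars ℝ) s := aux_expDerivR Hop _ s
    have hUψ : HasDerivAt (fun u : ℝ => Uop u ψ)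
        ((-Complex.I) • (Uop s (Hop ψ))) s := by
      have := hU.clm_apply (hasDerivAt_const s ψ)
      simpa [ContinuousLinearMap.mul_apply] using this
    have hPUψ : HasDerivAt (fun u : ℝ => P (Uop u ψ))
        (P ((-Complex.I) • (Uop s (Hop ψ)))) s :=
      ((P.restrictScalars ℝ).hasFDerivAt).comp_hasDerivAt s hUψ
    have hu : HasDerivAt (fun u : ℝ => Uop u ψ - P (Uop u ψ))
        ((-Complex.I) • (Uop s (Hop ψ)) - P ((-Complex.I) • (Uop s (Hop ψ)))) s :=
      hUψ.sub hPUψ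
    have hDsimp : HasDerivAt g
        (((Complex.I • (Vop s * Hop)).restrictScalars ℝ) (Uop s ψ - P (Uop s ψ)) +
          ((Vop s).restrictScalars ℝ)
            ((-Complex.I) • (Uop s (Hop ψ)) - P ((-Complex.I) • (Uop s (Hop ψ))))) s :=
      hV.clm_apply hu
    have hKw : K (Uop s ψ) = P (Hop (Uop s ψ)) - Hop (P (Uop s ψ)) := by
      rw [hK]
      simp [ContinuousLinearMap.comp_apply, hUχ s]
    convert hDsimp using 1
    rw [hKw]
    simp only [ContinuousLinearMap.coe_restrictScalars', ContinuousLinearMap.smul_apply,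
      ContinuousLinearMap.mul_apply, map_sub, map_smul, hUcomm s, smul_sub]
    module
  -- bound on the derivative
  have hbound : ∀ s : ℝ, ‖Complex.I • Vop s (K (Uop s ψ))‖ ≤ C * ε ^ 3 := by
    intro s
    rw [norm_smul, Complex.norm_I, one_mul, hVnorm]
    calc ‖K (Uop s ψ)‖ ≤ ‖K‖ * ‖Uop s ψ‖ := K.le_opNorm _
      _ = ‖K‖ := by rw [hUnorm, hψ, mul_one]
      _ ≤ C * ε ^ 3 := hinv
  -- mean value inequality
  have key : ‖g t - g 0‖ ≤ C * ε ^ 3 * ‖t - 0‖ := by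
    refine convex_univ.norm_image_sub_le_of_norm_hasDerivWithin_le
      (fun s _ => (hgderiv s).hasDerivWithinAt) (fun s _ => hbound s)
      (Set.mem_univ 0) (Set.mem_univ t)
  rw [hg0, sub_zero, sub_zero, Real.norm_eq_abs] at key
  calc ‖Uop t ψ - P (Uop t ψ)‖ = ‖g t‖ := (hVnorm t _).symm
    _ ≤ C * ε ^ 3 * |t| := key
end

section
/- Let P be an orthogonal projection on a Hilbert space and P^ε = P + εP¹ + ε²P² a symmetric operator with (P^ε)² = P^ε + O(ε³) in operator norm, where P¹, P² are bounded and symmetric. Then for ε small enough there exists a true orthogonal projection Q^ε with ‖Q^ε - P^ε‖ = O(ε³), obtained via the spectral projection of P^ε onto the spectrum near 1. -/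
open ContinuousLinearMap

lemma spec_dichotomy {δ x : ℝ} (hδ : 0 ≤ δ) (hδ8 : δ ≤ 1/8)
    (h : |x*x - x| ≤ δ) :
    (x ≤ 1/4 ∧ |x| ≤ 2*δ) ∨ (3/4 ≤ x ∧ |x - 1| ≤ 2*δ) := by
  rw [abs_le] at h
  by_cases hx : x ≤ 1/4
  · left
    refine ⟨hx, abs_le.2 ⟨by nlinarith, by nlinarith⟩⟩
  · right
    push_neg at hx
    have h34 : 3/4 ≤ x := by nlinarith [sq_nonneg (x - 1/2)]
    exact ⟨h34, abs_le.2 ⟨by nlinarith, by nlinarith⟩⟩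

lemma aux_proj {ℋ : Type*} [NormedAddCommGroup ℋ] [InnerProductSpace ℂ ℋ]
    [CompleteSpace ℋ] [Nontrivial ℋ]
    (a : ℋ →L[ℂ] ℋ) (ha : IsSelfAdjoint a) {δ : ℝ} (hδ : 0 ≤ δ) (hδ8 : δ ≤ 1/8)
    (h : ‖a * a - a‖ ≤ δ) :
    ∃ Q : ℋ →L[ℂ] ℋ, IsSelfAdjoint Q ∧ Q * Q = Q ∧ ‖Q - a‖ ≤ 2 * δ := by
  set f : ℝ → ℝ := fun x => min 1 (max 0 (2*x - 1/2)) with hf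
  have hfc : Continuous f := by fun_prop
  have hspec : ∀ x ∈ spectrum ℝ a, |x*x - x| ≤ δ := by
    intro x hx
    have hmem : (x*x - x) ∈ spectrum ℝ (a*a - a) := by
      have : cfc (fun y : ℝ => y*y - y) a = a*a - a := by
        rw [cfc_sub _ _ a (by fun_prop) (by fun_prop), cfc_mul _ _ a (by fun_prop) (by fun_prop),
          cfc_id' ℝ a]
      rw [← this, cfc_map_spectrum (fun y : ℝ => y*y - y) a ha (by fun_prop)]
      exact ⟨x, hx, rfl⟩
    calc |x*x - x| = ‖x*x - x‖ := rfl
      _ ≤ ‖a*a - a‖ := spectrum.norm_le_norm_of_mem hmem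
      _ ≤ δ := h
  have key : ∀ x ∈ spectrum ℝ a, (f x = 0 ∧ |x| ≤ 2*δ) ∨ (f x = 1 ∧ |x - 1| ≤ 2*δ) := by
    intro x hx
    rcases spec_dichotomy hδ hδ8 (hspec x hx) with ⟨h1, h2⟩ | ⟨h1, h2⟩
    · left
      refine ⟨?_, h2⟩
      simp only [hf]
      have : 2*x - 1/2 ≤ 0 := by linarith
      rw [max_eq_left this, min_eq_right zero_le_one]
    · right
      refine ⟨?_, h2⟩
      simp only [hf]
      have h0 : (1:ℝ) ≤ 2*x - 1/2 := by linarith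
      rw [max_eq_right (by linarith), min_eq_left h0]
  refine ⟨cfc f a, cfc_predicate f a, ?_, ?_⟩
  · rw [← cfc_mul f f a (by fun_prop) (by fun_prop)]
    apply cfc_congr
    intro x hx
    rcases key x hx with ⟨h1, _⟩ | ⟨h1, _⟩ <;> simp [h1]
  · have : cfc f a - a = cfc (fun x => f x - x) a := by
      rw [cfc_sub _ _ a (by fun_prop) (by fun_prop), cfc_id' ℝ a]
    rw [this]
    apply norm_cfc_le (by linarith)
    intro x hx
    rcases key x hx with ⟨h1, h2⟩ | ⟨h1, h2⟩
    · rw [h1]; simpa using h2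
    · rw [h1]
      rw [Real.norm_eq_abs, abs_sub_comm]
      simpa [abs_sub_comm] using h2

/-- if `P^ε = P + εP¹ + ε²P²` is a symmetric almost-projection,
`‖(P^ε)² - P^ε‖ ≤ Cε³` for `ε ≤ ε₀`, then for small `ε` there is a true orthogonal
projection `Q^ε` (the Riesz spectral projection of `P^ε` near `1`) with
`‖Q^ε - P^ε‖ = O(ε³)`. -/
theorem superadiabatic_projection_exists
    {ℋ : Type*} [NormedAddCommGroup ℋ] [InnerProductSpace ℂ ℋ] [CompleteSpace ℋ]
    (P P1 P2 : ℋ →L[ℂ] ℋ) (C ε₀ : ℝ) (hC : 0 < C) (hε₀ : 0 < ε₀)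
    (hPsa : IsSelfAdjoint P) (hPproj : P ∘L P = P)
    (hP1sa : IsSelfAdjoint P1) (hP2sa : IsSelfAdjoint P2)
    (halmost : ∀ ε : ℝ, 0 < ε → ε ≤ ε₀ →
      ‖(P + ε • P1 + ε ^ 2 • P2) ∘L (P + ε • P1 + ε ^ 2 • P2)
          - (P + ε • P1 + ε ^ 2 • P2)‖ ≤ C * ε ^ 3) :
    ∃ C' ε₁ : ℝ, 0 < C' ∧ 0 < ε₁ ∧ ∀ ε : ℝ, 0 < ε → ε ≤ ε₁ →
      ∃ Q : ℋ →L[ℂ] ℋ, IsSelfAdjoint Q ∧ Q ∘L Q = Q ∧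
        ‖Q - (P + ε • P1 + ε ^ 2 • P2)‖ ≤ C' * ε ^ 3 := by
  refine ⟨2*C, min ε₀ (min 1 (1/(8*C))), by linarith, by positivity, ?_⟩
  intro ε hε hε₁
  rcases subsingleton_or_nontrivial ℋ with hsub | hnt
  · refine ⟨0, IsSelfAdjoint.zero _, by simp, ?_⟩
    have : (0 : ℋ →L[ℂ] ℋ) - (P + ε • P1 + ε ^ 2 • P2) = 0 := Subsingleton.elim _ _
    rw [this]
    simp only [norm_zero]
    positivity
  · set a := P + ε • P1 + ε ^ 2 • P2 with ha_def
    have hεε₀ : ε ≤ ε₀ := hε₁.trans (min_le_left _ _)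
    have hε1 : ε ≤ 1 := hε₁.trans ((min_le_right _ _).trans (min_le_left _ _))
    have hε8C : ε ≤ 1/(8*C) := hε₁.trans ((min_le_right _ _).trans (min_le_right _ _))
    have hsa : IsSelfAdjoint a := by
      refine (hPsa.add (IsSelfAdjoint.smul ?_ hP1sa)).add (IsSelfAdjoint.smul ?_ hP2sa)
      · exact star_trivial ε
      · exact star_trivial (ε^2)
    have hδ8 : C * ε ^ 3 ≤ 1/8 := by
      have h3 : ε^3 ≤ ε := by nlinarith
      have : C * ε ^ 3 ≤ C * ε := by nlinarith
      have h2 : C * ε ≤ 1/8 := by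
        have h4 := mul_le_mul_of_nonneg_left hε8C hC.le
        have h5 : C * (1/(8*C)) = 1/8 := by field_simp
        linarith
      linarith
    obtain ⟨Q, hQ1, hQ2, hQ3⟩ := aux_proj a hsa (by positivity) hδ8
      (halmost ε hε hεε₀)
    exact ⟨Q, hQ1, hQ2, by linarith [hQ3]⟩
end

section
/- Let H be self-adjoint, bounded below, on ℋ, and H_eff self-adjoint on ℋ' with unitary U: 𝒫 → ℋ' from Ran(P) ⊂ ℋ. Suppose ‖(H U* - U* H_eff)χ(H_eff)‖ ≤ δ for a bounded spectral cutoff χ. Then for all t ∈ ℝ, ‖(e^{-iHt} U* - U* e^{-iH_eff t})χ(H_eff)‖ ≤ δ|t|. -/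
open ContinuousLinearMap

section DuhamelAux

open NormedSpace Complex

private lemma duhamel_norm_exp_skew_le_one {ℋ : Type*} [NormedAddCommGroup ℋ]
    [InnerProductSpace ℂ ℋ] [CompleteSpace ℋ] (H : ℋ →L[ℂ] ℋ) (hH : IsSelfAdjoint H)
    (z : ℂ) (hz : z.re = 0) :
    ‖exp (z • H)‖ ≤ 1 := by
  have hmem : z • H ∈ skewAdjoint (ℋ →L[ℂ] ℋ) := by
    rw [skewAdjoint.mem_iff, star_smul, hH.star_eq]
    have : star z = -z := by
      apply Complex.ext <;> simp [hz]
    rw [this, neg_smul]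
  have hu : exp (z • H) ∈ unitary (ℋ →L[ℂ] ℋ) :=
    by
      let +nondep : NormedAlgebra ℚ (ℋ →L[ℂ] ℋ) := .restrictScalars ℚ ℂ _
      exact exp_mem_unitary_of_mem_skewAdjoint hmem
  have h1 : star (exp (z • H)) * exp (z • H) = 1 := hu.1
  have h2 := CStarRing.norm_star_mul_self (x := exp (z • H))
  rw [h1] at h2
  have h3 : ‖(1 : ℋ →L[ℂ] ℋ)‖ ≤ 1 := by
    rw [ContinuousLinearMap.one_def]; exact ContinuousLinearMap.norm_id_le
  nlinarith [norm_nonneg (exp (z • H))]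

private lemma duhamel_hasDerivAt_phi {ℋ ℋ' : Type*} [NormedAddCommGroup ℋ]
    [InnerProductSpace ℂ ℋ] [CompleteSpace ℋ]
    [NormedAddCommGroup ℋ'] [InnerProductSpace ℂ ℋ'] [CompleteSpace ℋ']
    (H : ℋ →L[ℂ] ℋ) (Heff : ℋ' →L[ℂ] ℋ') (V : ℋ' →L[ℂ] ℋ) (χ : ℋ' →L[ℂ] ℋ') (z : ℂ) :
    HasDerivAt (fun w : ℂ => (exp (w • H)) ∘L (V ∘L ((exp (w • (-Heff))) ∘L χ)))
      ((exp (z • H) * H) ∘L (V ∘L ((exp (z • (-Heff))) ∘L χ)) +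
        (exp (z • H)) ∘L (V ∘L ((exp (z • (-Heff)) * (-Heff)) ∘L χ))) z := by
  have h1 : HasDerivAt (fun w : ℂ => exp (w • H)) (exp (z • H) * H) z :=
    hasDerivAt_exp_smul_const H z
  have h2 : HasDerivAt (fun w : ℂ => exp (w • (-Heff))) (exp (z • (-Heff)) * (-Heff)) z :=
    hasDerivAt_exp_smul_const (-Heff) z
  have h3 := h2.clm_comp (hasDerivAt_const z χ)
  have h4 := (hasDerivAt_const z V).clm_comp h3
  have h5 := h1.clm_comp h4
  simpa using h5

private lemma duhamel_hasDerivAt_A {ℋ ℋ' : Type*} [NormedAddCommGroup ℋ]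
    [InnerProductSpace ℂ ℋ] [CompleteSpace ℋ]
    [NormedAddCommGroup ℋ'] [InnerProductSpace ℂ ℋ'] [CompleteSpace ℋ']
    (H : ℋ →L[ℂ] ℋ) (Heff : ℋ' →L[ℂ] ℋ') (V : ℋ' →L[ℂ] ℋ) (χ : ℋ' →L[ℂ] ℋ')
    (hχcomm : Heff ∘L χ = χ ∘L Heff) (s : ℝ) :
    HasDerivAt (fun u : ℝ => (exp ((I * u) • H)) ∘L (V ∘L ((exp ((I * u) • (-Heff))) ∘L χ)))
      (I • ((exp ((I * s) • H)) ∘L (((H ∘L V - V ∘L Heff) ∘L χ) ∘L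
        (exp ((I * s) • (-Heff)))))) s := by
  have hh : HasDerivAt (fun u : ℝ => (I * u : ℂ)) I s := by
    simpa using ((Complex.ofRealCLM.hasDerivAt (x := s)).const_mul I)
  have hphi := duhamel_hasDerivAt_phi H Heff V χ (I * s)
  have hA := hphi.scomp hh (x := s)
  set E₁ := exp ((I * s : ℂ) • H) with hE₁
  set E₂ := exp ((I * s : ℂ) • (-Heff)) with hE₂
  have hcomm : Commute Heff χ := hχcomm
  have cχ : E₂ ∘L χ = χ ∘L E₂ := (hcomm.neg_left.smul_left (I * s : ℂ)).exp_left
  have cH : E₂ ∘L Heff = Heff ∘L E₂ :=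
    (((Commute.refl Heff).neg_left.smul_left (I * s : ℂ)).exp_left)
  have key : (E₁ * H) ∘L (V ∘L (E₂ ∘L χ)) + E₁ ∘L (V ∘L ((E₂ * (-Heff)) ∘L χ)) =
      E₁ ∘L (((H ∘L V - V ∘L Heff) ∘L χ) ∘L E₂) := by
    have k2 : E₂ ∘L (Heff ∘L χ) = Heff ∘L (χ ∘L E₂) := by
      rw [← comp_assoc, cH, comp_assoc, cχ]
    simp only [mul_def, mul_neg, neg_comp, comp_neg, sub_comp, comp_sub, comp_assoc]
    rw [cχ, k2]
    abel
  rw [← key]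
  exact hA

end DuhamelAux

set_option maxHeartbeats 1000000 in
/-- Duhamel: if `‖(H U* - U* H_eff) χ(H_eff)‖ ≤ δ` for a bounded spectral
cutoff `χ` commuting with `H_eff`, then the corresponding unitary groups stay `δ|t|`-close
on the range of the cutoff: `‖(e^{-iHt} U* - U* e^{-iH_eff t}) χ(H_eff)‖ ≤ δ|t|`.
Here `V = U* : ℋ' → ℋ`. -/
theorem duhamel_intertwining_dynamics
    {ℋ ℋ' : Type*} [NormedAddCommGroup ℋ] [InnerProductSpace ℂ ℋ] [CompleteSpace ℋ]
    [NormedAddCommGroup ℋ'] [InnerProductSpace ℂ ℋ'] [CompleteSpace ℋ']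
    (H : ℋ →L[ℂ] ℋ) (Heff : ℋ' →L[ℂ] ℋ') (V : ℋ' →L[ℂ] ℋ) (χ : ℋ' →L[ℂ] ℋ')
    (δ : ℝ) (hδ : 0 ≤ δ)
    (hH : IsSelfAdjoint H) (hHeff : IsSelfAdjoint Heff)
    -- `V = U*` is an isometry from `ℋ'` into `ℋ` (onto `𝒫`)
    (hVisom : (ContinuousLinearMap.adjoint V) ∘L V = 1)
    -- `χ = χ(H_eff)` commutes with `H_eff`
    (hχcomm : Heff ∘L χ = χ ∘L Heff)
    -- intertwining estimate on the energy range of the cutoff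
    (hint : ‖(H ∘L V - V ∘L Heff) ∘L χ‖ ≤ δ) :
    ∀ t : ℝ,
      ‖((NormedSpace.exp ((-(Complex.I * t)) • H)) ∘L V -
          V ∘L (NormedSpace.exp ((-(Complex.I * t)) • Heff))) ∘L χ‖
        ≤ δ * |t| := by
  intro t
  open NormedSpace Complex in
  set A : ℝ → (ℋ' →L[ℂ] ℋ) :=
    fun u => (exp ((I * u) • H)) ∘L (V ∘L ((exp ((I * u) • (-Heff))) ∘L χ)) with hAdef
  set A' : ℝ → (ℋ' →L[ℂ] ℋ) :=
    fun s => I • ((exp ((I * s) • H)) ∘L (((H ∘L V - V ∘L Heff) ∘L χ) ∘L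
        (exp ((I * s) • (-Heff))))) with hA'def
  have hderiv : ∀ s : ℝ, HasDerivAt A (A' s) s :=
    fun s => duhamel_hasDerivAt_A H Heff V χ hχcomm s
  have hbound : ∀ s : ℝ, ‖A' s‖ ≤ δ := by
    intro s
    have h1 : ‖exp ((I * s : ℂ) • H)‖ ≤ 1 :=
      duhamel_norm_exp_skew_le_one H hH _ (by simp)
    have h2 : ‖exp ((I * s : ℂ) • (-Heff))‖ ≤ 1 :=
      duhamel_norm_exp_skew_le_one (-Heff) hHeff.neg _ (by simp)
    have hB : (0:ℝ) ≤ ‖(H ∘L V - V ∘L Heff) ∘L χ‖ := norm_nonneg _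
    simp only [hA'def]
    rw [norm_smul I ((exp ((I * s : ℂ) • H)) ∘L (((H ∘L V - V ∘L Heff) ∘L χ) ∘L
      (exp ((I * s : ℂ) • (-Heff))))), Complex.norm_I, one_mul]
    calc ‖(exp ((I * s : ℂ) • H)) ∘L (((H ∘L V - V ∘L Heff) ∘L χ) ∘L
            (exp ((I * s : ℂ) • (-Heff))))‖
        ≤ ‖exp ((I * s : ℂ) • H)‖ * (‖(H ∘L V - V ∘L Heff) ∘L χ‖ *
            ‖exp ((I * s : ℂ) • (-Heff))‖) :=
          le_trans (opNorm_comp_le _ _) (by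
            gcongr
            exact opNorm_comp_le _ _)
      _ ≤ 1 * (δ * 1) := by
          gcongr
      _ = δ := by ring
  have hA0 : A 0 = V ∘L χ := by
    rw [hAdef]
    simp [NormedSpace.exp_zero, ContinuousLinearMap.one_def]
  have hmain : ‖A t - A 0‖ ≤ δ * |t| := by
    rcases le_or_gt 0 t with ht | ht
    · have := norm_image_sub_le_of_norm_deriv_le_segment' (f := A) (f' := A')
        (a := 0) (b := t) (C := δ)
        (fun x _ => (hderiv x).hasDerivWithinAt)
        (fun x _ => hbound x) t (Set.right_mem_Icc.mpr ht)
      rw [_root_.abs_of_nonneg ht]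
      simpa using this
    · have := norm_image_sub_le_of_norm_deriv_le_segment' (f := A) (f' := A')
        (a := t) (b := 0) (C := δ)
        (fun x _ => (hderiv x).hasDerivWithinAt)
        (fun x _ => hbound x) 0 (Set.right_mem_Icc.mpr ht.le)
      rw [norm_sub_rev] at this
      rw [_root_.abs_of_neg ht]
      simpa using this
  -- relate the target to `A`
  set F := exp ((-(I * t : ℂ)) • H) with hF
  have hFE : F ∘L (exp ((I * t : ℂ) • H)) = 1 := by
    have hc : Commute (-((I * t : ℂ) • H)) ((I * t : ℂ) • H) := (Commute.refl _).neg_left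
    have := (by
      let +nondep : NormedAlgebra ℚ (ℋ →L[ℂ] ℋ) := .restrictScalars ℚ ℂ _
      exact (exp_add_of_commute hc).symm)
    rw [neg_add_cancel, NormedSpace.exp_zero] at this
    rw [hF, neg_smul]
    exact this
  have hE2 : exp ((-(I * t : ℂ)) • Heff) = exp ((I * t : ℂ) • (-Heff)) := by
    rw [neg_smul, ← smul_neg]
  have hFnorm : ‖F‖ ≤ 1 := duhamel_norm_exp_skew_le_one H hH _ (by simp)
  have hT : (F ∘L V - V ∘L (exp ((-(I * t : ℂ)) • Heff))) ∘L χ = F ∘L (A 0 - A t) := by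
    rw [hA0]
    show _ = F ∘L ((V ∘L χ) -
      (exp ((I * t : ℂ) • H)) ∘L (V ∘L ((exp ((I * t : ℂ) • (-Heff))) ∘L χ)))
    rw [hE2]
    rw [comp_sub, sub_comp, ← comp_assoc F (NormedSpace.exp ((I * t : ℂ) • H)), hFE,
      ContinuousLinearMap.one_def, ContinuousLinearMap.id_comp]
    simp [comp_assoc]
  calc ‖((exp ((-(I * t : ℂ)) • H)) ∘L V -
          V ∘L (exp ((-(I * t : ℂ)) • Heff))) ∘L χ‖
      = ‖F ∘L (A 0 - A t)‖ := by rw [← hF, hT]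
    _ ≤ ‖F‖ * ‖A 0 - A t‖ := opNorm_comp_le _ _
    _ ≤ 1 * (δ * |t|) := by
        gcongr
        rw [norm_sub_rev]; exact hmain
    _ = δ * |t| := one_mul _
end
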